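/- Let L = ℤ² be equipped with a symmetric bilinear form b such that b(x,x) is even for every x ∈ L and the Gram matrix of the standard basis has determinant −1. Then there exists a basis u, v of L with b(u,u) = b(v,v) = 0 and b(u,v) = 1; i.e., L is isomorphic to the hyperbolic plane U. -/

import Mathlib

/-- An even lattice of rank 2 whose Gram matrix (in the standard basis of
`ℤ²`) has determinant `-1` is isomorphic to the hyperbolic plane `U`: it has
a basis `u, v` with `⟨u,u⟩ = ⟨v,v⟩ = 0` and `⟨u,v⟩ = 1`. -/
theorem even_rank_two_det_neg_one_is_hyperbolic_plane
    (b : (Fin 2 → ℤ) →ₗ[ℤ] (Fin 2 → ℤ) →ₗ[ℤ] ℤ)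
    (hsymm : ∀ x y, b x y = b y x) (heven : ∀ x, Even (b x x))
    (hdet : b (Pi.single 0 1) (Pi.single 0 1) * b (Pi.single 1 1) (Pi.single 1 1)
      - b (Pi.single 0 1) (Pi.single 1 1) * b (Pi.single 1 1) (Pi.single 0 1)
        = -1) :
    ∃ B : Module.Basis (Fin 2) ℤ (Fin 2 → ℤ),
      b (B 0) (B 0) = 0 ∧ b (B 1) (B 1) = 0 ∧ b (B 0) (B 1) = 1 := by
  set A := b (Pi.single 0 1) (Pi.single 0 1) with hA
  set M := b (Pi.single 0 1) (Pi.single 1 1) with hM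
  set C := b (Pi.single 1 1) (Pi.single 1 1) with hC
  have hM' : b (Pi.single 1 1) (Pi.single 0 1) = M := hsymm _ _
  have hz : ∀ z : Fin 2 → ℤ, z = z 0 • (Pi.single 0 1 : Fin 2 → ℤ) + z 1 • Pi.single 1 1 := by
    intro z; funext j; fin_cases j <;> simp [Pi.single_apply]
  have hexp : ∀ z w : Fin 2 → ℤ, b z w =
      A * (z 0 * w 0) + M * (z 0 * w 1) + M * (z 1 * w 0) + C * (z 1 * w 1) := by
    intro z w
    conv_lhs => rw [hz z, hz w]
    simp only [map_add, map_smul, LinearMap.add_apply, LinearMap.smul_apply, smul_eq_mul, hM']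
    rw [← hA, ← hM, ← hC]; ring
  rw [hM'] at hdet
  obtain ⟨a, ha⟩ := heven (Pi.single 0 1)
  obtain ⟨c, hc⟩ := heven (Pi.single 1 1)
  rw [← hA] at ha; rw [← hC] at hc
  -- M is odd
  obtain ⟨k, hk⟩ : ∃ k, M = 2 * k + 1 := by
    rcases Int.even_or_odd M with ⟨m, hm⟩ | ⟨m, hm⟩
    · exfalso
      have h4 : 4 * (a * c - m * m) = -1 := by
        rw [ha, hc, hm] at hdet; linear_combination hdet
      omega
    · exact ⟨m, hm⟩
  have hkey : a * c = k * (k + 1) := by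
    have h4 : 4 * (a * c) = 4 * (k * (k + 1)) := by
      rw [ha, hc, hk] at hdet; linear_combination hdet
    exact mul_left_cancel₀ (by norm_num : (4:ℤ) ≠ 0) h4
  have hdisc : M * M - 4 * (a * c) = 1 := by rw [hk, hkey]; ring
  -- primitive isotropic vector
  obtain ⟨x0, y0, p, q, hiso, hbez⟩ :
      ∃ x0 y0 p q : ℤ, a * x0 ^ 2 + M * (x0 * y0) + c * y0 ^ 2 = 0 ∧ p * x0 + q * y0 = 1 := by
    by_cases ha0 : a = 0
    · exact ⟨1, 0, 1, 0, by rw [ha0]; ring, by ring⟩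
    · set g : ℤ := (Int.gcd (k + 1) a : ℤ) with hg
      have hgpos : 0 < Int.gcd (k + 1) a := Int.gcd_pos_of_ne_zero_right _ ha0
      have hgne : g ≠ 0 := by positivity
      obtain ⟨x0, hx0⟩ : g ∣ (k + 1) := Int.gcd_dvd_left _ _
      obtain ⟨ya, hya⟩ : g ∣ a := Int.gcd_dvd_right _ _
      have hcop : IsCoprime x0 ya := by
        rw [Int.isCoprime_iff_gcd_eq_one]
        have h := Int.gcd_div_gcd_div_gcd hgpos
        have h1 : (k + 1) / g = x0 := by rw [hx0]; exact Int.mul_ediv_cancel_left _ hgne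
        have h2 : a / g = ya := by rw [hya]; exact Int.mul_ediv_cancel_left _ hgne
        rwa [← hg, h1, h2] at h
      obtain ⟨p, q', hpq⟩ := hcop
      refine ⟨x0, -ya, p, -q', ?_, by linear_combination hpq⟩
      have hgg : g * g * (a * x0 ^ 2 + M * (x0 * -ya) + c * (-ya) ^ 2) = 0 := by
        have : a * (k+1) ^ 2 - M * ((k+1) * a) + c * a ^ 2 = 0 := by
          rw [hk]; linear_combination a * hkey
        calc g * g * (a * x0 ^ 2 + M * (x0 * -ya) + c * (-ya) ^ 2)
            = a * (g * x0) ^ 2 - M * ((g * x0) * (g * ya)) + c * (g * ya) ^ 2 := by ring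
          _ = 0 := by rw [← hx0, ← hya, this]
      have := mul_eq_zero.mp hgg
      rcases this with h | h
      · exact absurd (mul_self_eq_zero.mp h) hgne
      · exact h
  -- construct the hyperbolic basis
  set w0 : ℤ := q * M - p * (c + c) with hw0
  set w1 : ℤ := p * M - q * (a + a) with hw1
  have hbw : (a + a) * (x0 * w0) + M * (x0 * w1) + M * (y0 * w0) + (c + c) * (y0 * w1) = 1 := by
    rw [hw0, hw1]; linear_combination (p * x0 + q * y0) * hdisc + hbez
  set s : ℤ := a * w0 ^ 2 + M * (w0 * w1) + c * w1 ^ 2 with hs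
  set v0 : ℤ := w0 - s * x0 with hv0
  set v1 : ℤ := w1 - s * y0 with hv1
  have Quu : (a + a) * (x0 * x0) + M * (x0 * y0) + M * (y0 * x0) + (c + c) * (y0 * y0) = 0 := by
    linear_combination 2 * hiso
  have Quv : (a + a) * (x0 * v0) + M * (x0 * v1) + M * (y0 * v0) + (c + c) * (y0 * v1) = 1 := by
    rw [hv0, hv1]; linear_combination hbw - (2 * s) * hiso
  have Qvv : (a + a) * (v0 * v0) + M * (v0 * v1) + M * (v1 * v0) + (c + c) * (v1 * v1) = 0 := by
    rw [hv0, hv1, hs]; linear_combination (-2 : ℤ) * hs + (-2 * s) * hbw + (2 * s * s) * hiso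
  have hd2 : (x0 * v1 - y0 * v0) ^ 2 = 1 := by
    linear_combination
      (((a + a) * (x0 * v0) + M * (x0 * v1) + M * (y0 * v0) + (c + c) * (y0 * v1)) + 1) * Quv
      - ((a + a) * (v0 * v0) + M * (v0 * v1) + M * (v1 * v0) + (c + c) * (v1 * v1)) * Quu
      - (x0 * v1 - y0 * v0) ^ 2 * hdisc
  set P : Matrix (Fin 2) (Fin 2) ℤ := !![x0, v0; y0, v1] with hP
  have hdu : IsUnit P.det := by
    rw [hP, Matrix.det_fin_two_of]
    exact IsUnit.of_mul_eq_one (x0 * v1 - v0 * y0) (by linear_combination hd2)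
  have hPinv : Invertible P := P.invertibleOfIsUnitDet hdu
  set B := (Pi.basisFun ℤ (Fin 2)).map (P.toLinearEquiv' hPinv) with hB
  have happ : ∀ x, (P.toLinearEquiv' hPinv) x = Matrix.mulVec P x := by
    intro x
    calc (P.toLinearEquiv' hPinv) x
        = (↑(P.toLinearEquiv' hPinv) : (Fin 2 → ℤ) →ₗ[ℤ] (Fin 2 → ℤ)) x := rfl
      _ = Matrix.toLin' P x := by rw [Matrix.toLinearEquiv'_apply]
      _ = Matrix.mulVec P x := Matrix.toLin'_apply _ _
  have hB0 : B 0 = ![x0, y0] := by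
    funext j
    fin_cases j <;>
      simp [hB, hP, Module.Basis.map_apply, happ, Matrix.mulVec, dotProduct,
        Fin.sum_univ_two, Pi.single_apply]
  have hB1 : B 1 = ![v0, v1] := by
    funext j
    fin_cases j <;>
      simp [hB, hP, Module.Basis.map_apply, happ, Matrix.mulVec, dotProduct,
        Fin.sum_univ_two, Pi.single_apply]
  refine ⟨B, ?_, ?_, ?_⟩
  · rw [hB0, hexp, ha, hc]
    simp only [Matrix.cons_val_zero, Matrix.cons_val_one, Matrix.head_cons]
    linear_combination Quu
  · rw [hB1, hexp, ha, hc]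
    simp only [Matrix.cons_val_zero, Matrix.cons_val_one, Matrix.head_cons]
    linear_combination Qvv
  · rw [hB0, hB1, hexp, ha, hc]
    simp only [Matrix.cons_val_zero, Matrix.cons_val_one, Matrix.head_cons]
    linear_combination Quv
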